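/- Assume 1/2 < β < 1 and δ = −1/2. Let (μ_t)_{t>0} be an ATS mixing family and σ̂ an ATM implied volatility for (μ_t). Then the skew term satisfies ξ̂_t → −√(π/2) as t → 0⁺. -/

import Mathlib

open MeasureTheory Real Filter Set Topology Asymptotics

/-- The ATS Laplace transform `L_t(u)` with parameters `α ∈ (0,1)`, `k̄ > 0`, `β ∈ ℝ`,
where `k_t = k̄·t^β`. -/
noncomputable def ATSLaplace (α kbar β : ℝ) (t u : ℝ) : ℝ :=
  Real.exp ((t / (kbar * t ^ β)) * ((1 - α) / α) *
    (1 - (1 + u * (kbar * t ^ β) / ((1 - α) * t)) ^ α))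

/-- Standard normal cumulative distribution function. -/
noncomputable def stdN (z : ℝ) : ℝ :=
  (Real.sqrt (2 * Real.pi))⁻¹ * ∫ x in Set.Iic z, Real.exp (-x ^ 2 / 2)

/-- Standard normal probability density function. -/
noncomputable def stdNd (z : ℝ) : ℝ :=
  (Real.sqrt (2 * Real.pi))⁻¹ * Real.exp (-z ^ 2 / 2)

/-- The drift `φ_t`, defined by `φ_t·t = −ln L_t(t·σ̄²·η_t)` with `η_t = η̄·t^δ`. -/
noncomputable def ATSphi (α kbar σbar ηbar β δ : ℝ) (t : ℝ) : ℝ :=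
  -Real.log (ATSLaplace α kbar β t (t * σbar ^ 2 * (ηbar * t ^ δ))) / t

/-- The quantity `l_t^z = −σ̄·η_t·√(z·t) + φ_t·√t/(σ̄·√z)`. -/
noncomputable def ATSl (α kbar σbar ηbar β δ : ℝ) (t z : ℝ) : ℝ :=
  -(σbar * (ηbar * t ^ δ)) * Real.sqrt (z * t) +
    ATSphi α kbar σbar ηbar β δ t * Real.sqrt t / (σbar * Real.sqrt z)

/-- The ATM ATS call price `C_t`. -/
noncomputable def ATSCall (α kbar σbar ηbar β δ : ℝ) (μ : Measure ℝ) (t : ℝ) : ℝ :=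
  ∫ z, (Real.exp (ATSphi α kbar σbar ηbar β δ t * t - t * σbar ^ 2 * (ηbar * t ^ δ) * z) *
      stdN (ATSl α kbar σbar ηbar β δ t z + σbar * Real.sqrt (z * t) / 2) -
      stdN (ATSl α kbar σbar ηbar β δ t z - σbar * Real.sqrt (z * t) / 2)) ∂μ

/-- The skew term `ξ̂_t`. -/
noncomputable def ATSSkew (α kbar σbar ηbar β δ : ℝ) (μ : Measure ℝ) (σhat : ℝ → ℝ)
    (t : ℝ) : ℝ :=
  (stdN (-(σhat t * Real.sqrt t / 2)) -
      ∫ z, stdN (ATSl α kbar σbar ηbar β δ t z - σbar * Real.sqrt (z * t) / 2) ∂μ) /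
    stdNd (-(σhat t * Real.sqrt t / 2))

lemma gauss_integrable : Integrable (fun x : ℝ => Real.exp (-x ^ 2 / 2)) := by
  have h := integrable_exp_neg_mul_sq (by norm_num : (0:ℝ) < 1/2)
  refine h.congr (by filter_upwards with x using by ring_nf)

lemma gauss_total : (∫ x : ℝ, Real.exp (-x ^ 2 / 2)) = Real.sqrt (2 * Real.pi) := by
  have h := integral_gaussian (1/2 : ℝ)
  rw [show Real.pi / (1/2) = 2 * Real.pi by ring] at h
  rw [← h]
  congr 1 with x
  ring_nf

lemma sqrt_two_pi_pos : 0 < Real.sqrt (2 * Real.pi) :=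
  Real.sqrt_pos.2 (by positivity)

lemma stdN_mono : Monotone stdN := by
  intro a b hab
  unfold stdN
  refine mul_le_mul_of_nonneg_left ?_ (inv_nonneg.2 sqrt_two_pi_pos.le)
  refine setIntegral_mono_set gauss_integrable.integrableOn ?_ ?_
  · filter_upwards with x using (Real.exp_pos _).le
  · exact HasSubset.Subset.eventuallyLE (Iic_subset_Iic.2 hab)

lemma stdN_nonneg (z : ℝ) : 0 ≤ stdN z := by
  unfold stdN
  have : 0 ≤ ∫ x in Set.Iic z, Real.exp (-x ^ 2 / 2) :=
    setIntegral_nonneg measurableSet_Iic fun x _ => (Real.exp_pos _).le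
  positivity

lemma stdN_le_one (z : ℝ) : stdN z ≤ 1 := by
  unfold stdN
  rw [inv_mul_le_iff₀ sqrt_two_pi_pos, mul_one, ← gauss_total]
  refine setIntegral_le_integral gauss_integrable ?_
  filter_upwards with x using (Real.exp_pos _).le

lemma stdN_lipschitz {a b : ℝ} (hab : a ≤ b) : stdN b - stdN a ≤ b - a := by
  unfold stdN
  rw [← mul_sub]
  have h1 : (∫ x in Set.Iic b, Real.exp (-x ^ 2 / 2)) - ∫ x in Set.Iic a, Real.exp (-x ^ 2 / 2)
      = ∫ x in Set.Ioc a b, Real.exp (-x ^ 2 / 2) := by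
    rw [sub_eq_iff_eq_add', ← setIntegral_union (Iic_disjoint_Ioc le_rfl) measurableSet_Ioc
      gauss_integrable.integrableOn gauss_integrable.integrableOn,
      Iic_union_Ioc_eq_Iic hab]
  rw [h1]
  have h2 : (∫ x in Set.Ioc a b, Real.exp (-x ^ 2 / 2)) ≤ ∫ _x in Set.Ioc a b, (1:ℝ) := by
    refine setIntegral_mono_on gauss_integrable.integrableOn
      (integrableOn_const measure_Ioc_lt_top.ne)
      measurableSet_Ioc fun x _ => Real.exp_le_one_iff.2 (by nlinarith [sq_nonneg x])
  have h3 : (∫ _x in Set.Ioc a b, (1:ℝ)) = b - a := by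
    simp [Real.volume_Ioc, ENNReal.toReal_ofReal (sub_nonneg.2 hab), hab]
  have h4 : (Real.sqrt (2 * Real.pi))⁻¹ ≤ 1 := by
    rw [inv_le_one_iff₀]
    right
    rw [show (1:ℝ) = Real.sqrt 1 by simp]
    exact Real.sqrt_le_sqrt (by nlinarith [Real.pi_gt_three])
  calc (Real.sqrt (2 * Real.pi))⁻¹ * ∫ x in Set.Ioc a b, Real.exp (-x ^ 2 / 2)
      ≤ 1 * (b - a) := by
        refine mul_le_mul h4 (h2.trans_eq h3) ?_ zero_le_one
        exact setIntegral_nonneg measurableSet_Ioc fun x _ => (Real.exp_pos _).le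
    _ = b - a := one_mul _

lemma stdN_neg (z : ℝ) : stdN (-z) = 1 - stdN z := by
  unfold stdN
  have key : (∫ x in Set.Iic (-z), Real.exp (-x ^ 2 / 2))
      = ∫ x in Set.Ioi z, Real.exp (-x ^ 2 / 2) := by
    have h := integral_comp_neg_Iic (-z) (fun x => Real.exp (-x ^ 2 / 2))
    simp only [neg_neg, neg_sq] at h
    exact h
  rw [key]
  have split := intervalIntegral.integral_Iic_add_Ioi (b := z) (μ := volume)
    gauss_integrable.integrableOn gauss_integrable.integrableOn
  rw [gauss_total] at split
  rw [eq_sub_iff_add_eq, ← mul_add, add_comm, split, inv_mul_cancel₀ sqrt_two_pi_pos.ne']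

lemma stdN_zero : stdN 0 = 1/2 := by
  have := stdN_neg 0
  rw [neg_zero] at this
  linarith

lemma stdN_tendsto_one : Tendsto stdN atTop (𝓝 1) := by
  have hcov : AECover (volume : Measure ℝ) atTop (fun i : ℝ => Set.Iic i) :=
    aecover_Iic tendsto_id
  have h := hcov.integral_tendsto_of_countably_generated gauss_integrable
  rw [gauss_total] at h
  have := h.const_mul (Real.sqrt (2 * Real.pi))⁻¹
  rw [inv_mul_cancel₀ sqrt_two_pi_pos.ne'] at this
  exact this

lemma stdN_measurable : Measurable stdN := stdN_mono.measurable

lemma stdN_pos_gt {ε : ℝ} (hε : 0 < ε) : 1/2 < stdN ε := by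
  rw [← stdN_zero]
  unfold stdN
  have hint : (∫ x in Set.Iic 0, Real.exp (-x ^ 2 / 2))
      < ∫ x in Set.Iic ε, Real.exp (-x ^ 2 / 2) := by
    have h1 : (∫ x in Set.Iic ε, Real.exp (-x ^ 2 / 2))
        - ∫ x in Set.Iic 0, Real.exp (-x ^ 2 / 2)
        = ∫ x in Set.Ioc 0 ε, Real.exp (-x ^ 2 / 2) := by
      rw [sub_eq_iff_eq_add', ← setIntegral_union (Iic_disjoint_Ioc le_rfl) measurableSet_Ioc
        gauss_integrable.integrableOn gauss_integrable.integrableOn,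
        Iic_union_Ioc_eq_Iic hε.le]
    have h2 : 0 < ∫ x in Set.Ioc 0 ε, Real.exp (-x ^ 2 / 2) := by
      refine (setIntegral_pos_iff_support_of_nonneg_ae ?_ gauss_integrable.integrableOn).2 ?_
      · filter_upwards with x using (Real.exp_pos _).le
      · have : (Function.support fun x : ℝ => Real.exp (-x ^ 2 / 2)) = Set.univ := by
          ext x; simp [Function.support, (Real.exp_pos _).ne']
        rw [this, Set.univ_inter, Real.volume_Ioc]
        simp [hε]
    linarith
  exact mul_lt_mul_of_pos_left hint (inv_pos.2 sqrt_two_pi_pos)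

lemma stdN_continuous : Continuous stdN := by
  have h : LipschitzWith 1 stdN := by
    apply LipschitzWith.of_dist_le_mul
    intro a b
    rw [Real.dist_eq, Real.dist_eq, NNReal.coe_one, one_mul]
    rcases le_total a b with h | h
    · rw [abs_of_nonpos (by linarith [stdN_mono h]), abs_of_nonpos (by linarith)]
      linarith [stdN_lipschitz h]
    · rw [abs_of_nonneg (by linarith [stdN_mono h]), abs_of_nonneg (by linarith)]
      linarith [stdN_lipschitz h]
  exact h.continuous

lemma bern_low {α x : ℝ} (hα0 : 0 < α) (hα1 : α < 1) (hx : 0 ≤ x) :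
    α * x / (1 + x) ≤ (1 + x) ^ α - 1 := by
  have h1 : (0:ℝ) < 1 + x := by linarith
  have hb : (1+x) ^ ((1:ℝ)-α) ≤ 1 + (1-α)*x :=
    rpow_one_add_le_one_add_mul_self (by linarith) (by linarith) (by linarith)
  have hpos2 : (0:ℝ) < 1 + (1-α)*x := by nlinarith
  have hmul : (1+x) ^ α * (1+x) ^ ((1:ℝ)-α) = 1 + x := by
    rw [← Real.rpow_add h1]; norm_num
  have h2 : (1+x)/(1+(1-α)*x) ≤ (1+x) ^ α := by
    rw [div_le_iff₀ hpos2]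
    calc (1+x) = (1+x) ^ α * (1+x) ^ ((1:ℝ)-α) := hmul.symm
      _ ≤ (1+x) ^ α * (1+(1-α)*x) :=
          mul_le_mul_of_nonneg_left hb (Real.rpow_nonneg h1.le _)
  have heq : (1+x)/(1+(1-α)*x) - 1 = α*x/(1+(1-α)*x) := by
    rw [div_sub_one hpos2.ne']; congr 1
    ring
  have h4 : α*x/(1+x) ≤ α*x/(1+(1-α)*x) := by
    apply div_le_div_of_nonneg_left (by positivity) hpos2
    nlinarith
  linarith

lemma rpow_tendsto0 {p : ℝ} (hp : 0 < p) :
    Tendsto (fun t : ℝ => t ^ p) (𝓝[>] (0:ℝ)) (𝓝 0) := by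
  have h := (Real.continuousAt_rpow_const 0 p (Or.inr hp.le)).tendsto
  rw [Real.zero_rpow hp.ne'] at h
  exact h.mono_left nhdsWithin_le_nhds

lemma choose_r (σ η M : ℝ) (hσ : 0 < σ) (hη : 0 < η) :
    ∃ r : ℝ, 0 < r ∧ r ≤ 1 ∧ M ≤ σ*η/(2*r) - (σ*η + σ/2)*r := by
  set K := max M 0 + σ*η + σ/2 with hK
  have hKpos : 0 < K :=
    add_pos_of_nonneg_of_pos (add_nonneg (le_max_right M 0) (by positivity)) (by positivity)
  set r := min 1 (σ*η/(2*K)) with hr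
  have hrpos : 0 < r := lt_min one_pos (by positivity)
  have hr1 : r ≤ 1 := min_le_left _ _
  refine ⟨r, hrpos, hr1, ?_⟩
  have h1 : r ≤ σ*η/(2*K) := min_le_right _ _
  have h1' : r * (2*K) ≤ σ*η := (le_div_iff₀ (by positivity)).1 h1
  have h2 : K ≤ σ*η/(2*r) := by
    rw [le_div_iff₀ (by positivity)]
    nlinarith
  have h3 : (σ*η + σ/2)*r ≤ σ*η + σ/2 := mul_le_of_le_one_right (by positivity) hr1
  have h4 : M ≤ max M 0 := le_max_left _ _
  have h5 : max M 0 = K - (σ*η + σ/2) := by rw [hK]; ring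
  linarith

set_option maxHeartbeats 2000000 in
/-- Case 4: if `1/2 < β < 1` and `δ = −1/2`, then the skew term
satisfies `ξ̂_t → −√(π/2)` as `t → 0⁺`. -/
theorem stmt18 (α kbar σbar ηbar β δ : ℝ) (hα : α ∈ Set.Ioo (0:ℝ) 1)
    (hk : 0 < kbar) (hσ : 0 < σbar) (hη : 0 < ηbar)
    (hβl : 1/2 < β) (hβu : β < 1) (hδ : δ = -(1/2))
    (μ : ℝ → Measure ℝ)
    (hprob : ∀ t > 0, IsProbabilityMeasure (μ t))
    (hsupp : ∀ t > 0, μ t (Set.Iio 0) = 0)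
    (hlap : ∀ t > 0, ∀ u ≥ 0,
      (∫ x, Real.exp (-u * x) ∂(μ t)) = ATSLaplace α kbar β t u)
    (σhat : ℝ → ℝ) (hσpos : ∀ t > 0, 0 < σhat t)
    (hiv : ∀ t > 0,
      stdN (σhat t * Real.sqrt t / 2) - stdN (-(σhat t * Real.sqrt t / 2)) =
        ATSCall α kbar σbar ηbar β δ (μ t) t) :
    Tendsto (fun t => ATSSkew α kbar σbar ηbar β δ (μ t) σhat t)
      (𝓝[>] (0:ℝ)) (𝓝 (-Real.sqrt (Real.pi / 2))) := by
  obtain ⟨hα0, hα1⟩ := hα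
  subst hδ
  have hα1' : (0:ℝ) < 1 - α := by linarith
  simp only [ATSSkew]
  set I : ℝ → ℝ := fun t =>
    ∫ z, stdN (ATSl α kbar σbar ηbar β (-(1/2)) t z - σbar * Real.sqrt (z * t) / 2) ∂ μ t
    with hIdef
  -- basic facts
  have hexpint : ∀ t, 0 < t → ∀ u : ℝ, 0 ≤ u →
      Integrable (fun x => Real.exp (-u * x)) (μ t) := by
    intro t ht u hu
    by_contra h
    have h0 := integral_undef h
    have h1 := hlap t ht u hu
    rw [h0] at h1
    exact (Real.exp_pos _).ne h1
  have haeN : ∀ t, 0 < t → ∀ᵐ z ∂ μ t, 0 ≤ z := by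
    intro t ht
    have hset : {z : ℝ | ¬ 0 ≤ z} = Set.Iio 0 := by ext z; simp
    rw [ae_iff, hset]
    exact hsupp t ht
  have hmeas_l : ∀ t : ℝ, Measurable fun z => ATSl α kbar σbar ηbar β (-(1/2)) t z := by
    intro t
    unfold ATSl
    apply Measurable.add
    · exact (continuous_const.mul
        (Real.continuous_sqrt.comp (continuous_id.mul continuous_const))).measurable
    · exact measurable_const.div
        ((continuous_const.mul Real.continuous_sqrt).measurable)
  have hsqm : ∀ t : ℝ, Measurable fun z : ℝ => σbar * Real.sqrt (z * t) / 2 :=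
    fun t => ((continuous_const.mul
      (Real.continuous_sqrt.comp (continuous_id.mul continuous_const))).div_const 2).measurable
  have hIint : ∀ t, 0 < t → Integrable
      (fun z => stdN (ATSl α kbar σbar ηbar β (-(1/2)) t z - σbar * Real.sqrt (z * t) / 2))
      (μ t) := by
    intro t ht
    haveI := hprob t ht
    refine Integrable.mono' (integrable_const 1)
      ((stdN_measurable.comp ((hmeas_l t).sub (hsqm t))).aestronglyMeasurable) ?_
    filter_upwards with z
    rw [Real.norm_eq_abs, abs_of_nonneg (stdN_nonneg _)]
    exact stdN_le_one _
  -- ATSCall ≤ 1 - I t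
  have hcall : ∀ t, 0 < t → ATSCall α kbar σbar ηbar β (-(1/2)) (μ t) t ≤ 1 - I t := by
    intro t ht
    haveI := hprob t ht
    set u : ℝ := t * σbar ^ 2 * (ηbar * t ^ (-(1/2) : ℝ)) with hu
    have hu0 : 0 ≤ u := by
      have : 0 < t ^ (-(1/2) : ℝ) := Real.rpow_pos_of_pos ht _
      positivity
    set φt : ℝ := ATSphi α kbar σbar ηbar β (-(1/2)) t with hφt
    have hexpu := hexpint t ht u hu0
    have hptA : ∀ z, Real.exp (φt * t - u * z) *
        stdN (ATSl α kbar σbar ηbar β (-(1/2)) t z + σbar * Real.sqrt (z * t) / 2)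
        ≤ Real.exp (φt * t) * Real.exp (-u * z) := by
      intro z
      have he : Real.exp (φt * t) * Real.exp (-u * z) = Real.exp (φt * t - u * z) := by
        rw [← Real.exp_add]; congr 1; ring
      rw [← he]
      calc Real.exp (φt * t) * Real.exp (-u * z) *
            stdN (ATSl α kbar σbar ηbar β (-(1/2)) t z + σbar * Real.sqrt (z * t) / 2)
          ≤ Real.exp (φt * t) * Real.exp (-u * z) * 1 := by
            refine mul_le_mul_of_nonneg_left (stdN_le_one _) (by positivity)
        _ = Real.exp (φt * t) * Real.exp (-u * z) := mul_one _
      -- note: rewrote product form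
    have hAint : Integrable (fun z => Real.exp (φt * t - u * z) *
        stdN (ATSl α kbar σbar ηbar β (-(1/2)) t z + σbar * Real.sqrt (z * t) / 2)) (μ t) := by
      refine Integrable.mono' (hexpu.const_mul (Real.exp (φt * t))) ?_ ?_
      · exact ((Real.measurable_exp.comp
          (measurable_const.sub (measurable_id.const_mul u))).mul
          (stdN_measurable.comp ((hmeas_l t).add (hsqm t)))).aestronglyMeasurable
      · filter_upwards with z
        rw [Real.norm_eq_abs, abs_of_nonneg (mul_nonneg (Real.exp_pos _).le (stdN_nonneg _))]
        exact hptA z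
    have hsplit : ATSCall α kbar σbar ηbar β (-(1/2)) (μ t) t =
        (∫ z, Real.exp (φt * t - u * z) *
          stdN (ATSl α kbar σbar ηbar β (-(1/2)) t z + σbar * Real.sqrt (z * t) / 2) ∂ μ t)
        - I t := by
      unfold ATSCall
      rw [← hu, ← hφt]
      exact integral_sub hAint (hIint t ht)
    have hLp : 0 < ATSLaplace α kbar β t u := Real.exp_pos _
    have hALe : (∫ z, Real.exp (φt * t - u * z) *
          stdN (ATSl α kbar σbar ηbar β (-(1/2)) t z + σbar * Real.sqrt (z * t) / 2) ∂ μ t)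
        ≤ 1 := by
      calc (∫ z, Real.exp (φt * t - u * z) *
              stdN (ATSl α kbar σbar ηbar β (-(1/2)) t z + σbar * Real.sqrt (z * t) / 2) ∂ μ t)
          ≤ ∫ z, Real.exp (φt * t) * Real.exp (-u * z) ∂ μ t :=
            integral_mono hAint (hexpu.const_mul _) hptA
        _ = Real.exp (φt * t) * ∫ z, Real.exp (-u * z) ∂ μ t := integral_const_mul _ _
        _ = Real.exp (φt * t) * ATSLaplace α kbar β t u := by rw [hlap t ht u hu0]
        _ = 1 := by
            rw [hφt]
            unfold ATSphi
            rw [← hu, div_mul_cancel₀ _ ht.ne', Real.exp_neg, Real.exp_log hLp,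
              inv_mul_cancel₀ hLp.ne']
    linarith [hsplit, hALe]
  -- μ t (Iic 0) = 0
  have hIic0 : ∀ t, 0 < t → μ t (Set.Iic 0) = 0 := by
    intro t ht
    haveI := hprob t ht
    have hsing : μ t {0} = 0 := by
      have hb : ∀ u : ℝ, 0 ≤ u → (μ t {0}).toReal ≤ ATSLaplace α kbar β t u := by
        intro u hu
        have h1 : ∫ x in ({0} : Set ℝ), Real.exp (-u * x) ∂ μ t = (μ t {0}).toReal := by
          rw [integral_singleton]
          simp
          rfl
        have h2 : ∫ x in ({0} : Set ℝ), Real.exp (-u * x) ∂ μ t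
            ≤ ∫ x, Real.exp (-u * x) ∂ μ t :=
          setIntegral_le_integral (hexpint t ht u hu)
            (Eventually.of_forall fun x => (Real.exp_pos _).le)
        rw [h1, hlap t ht u hu] at h2
        exact h2
      have htd : Tendsto (fun u => ATSLaplace α kbar β t u) atTop (𝓝 0) := by
        unfold ATSLaplace
        have hAp : 0 < t ^ β := Real.rpow_pos_of_pos ht _
        have hD : 0 < (kbar * t ^ β) / ((1 - α) * t) := by positivity
        have h1 : Tendsto (fun u : ℝ => 1 + u * (kbar * t ^ β) / ((1 - α) * t))
            atTop atTop := by
          refine tendsto_atTop_add_const_left _ 1 ?_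
          simpa [mul_div_assoc] using tendsto_id.atTop_mul_const hD
        have h2 := (tendsto_rpow_atTop hα0).comp h1
        have h3 : Tendsto (fun u : ℝ =>
            1 - (1 + u * (kbar * t ^ β) / ((1 - α) * t)) ^ α) atTop atBot := by
          simpa [sub_eq_add_neg] using
            tendsto_atBot_add_const_left _ 1 (tendsto_neg_atTop_atBot.comp h2)
        have hC : 0 < t / (kbar * t ^ β) * ((1 - α) / α) := by positivity
        exact Real.tendsto_exp_atBot.comp (h3.const_mul_atBot hC)
      have hle : (μ t {0}).toReal ≤ 0 :=
        ge_of_tendsto htd (eventually_atTop.2 ⟨0, fun u hu => hb u hu⟩)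
      have h0 : (μ t {0}).toReal = 0 := le_antisymm hle ENNReal.toReal_nonneg
      rcases (ENNReal.toReal_eq_zero_iff _).1 h0 with h | h
      · exact h
      · exact absurd h (measure_ne_top _ _)
    have hle2 : μ t (Set.Iic 0) ≤ μ t (Set.Iio 0) + μ t {0} := by
      rw [← Set.Iio_union_right]
      exact measure_union_le _ _
    rw [hsupp t ht, hsing, add_zero] at hle2
    exact le_antisymm hle2 zero_le
  -- implied volatility equation consequence
  have hC2 : ∀ t, 0 < t → 2 * stdN (σhat t * Real.sqrt t / 2) - 1 ≤ 1 - I t := by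
    intro t ht
    have hiv' := hiv t ht
    rw [stdN_neg] at hiv'
    have := hcall t ht
    linarith
  -- Laplace at u = 1 tends to 1
  have he1pos : (0:ℝ) < (1 - β)/α := div_pos (by linarith) hα0
  have he2pos : (0:ℝ) < (1 - β)*(1 - α)/α := div_pos (mul_pos (by linarith) hα1') hα0
  have hL1 : Tendsto (fun t => ATSLaplace α kbar β t 1) (𝓝[>] (0:ℝ)) (𝓝 1) := by
    set e₁ := (1 - β)/α with he₁
    set e₂ := (1 - β)*(1 - α)/α with he₂
    set c := kbar/(1 - α) with hc
    have heq : ∀ᶠ t in 𝓝[>] (0:ℝ), ATSLaplace α kbar β t 1 =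
        Real.exp ((1/kbar) * ((1 - α)/α) * (t ^ ((1:ℝ) - β) - (t ^ e₁ + c * t ^ e₂) ^ α)) := by
      filter_upwards [self_mem_nhdsWithin] with t ht
      replace ht : 0 < t := ht
      have hA : 0 < t ^ β := Real.rpow_pos_of_pos ht _
      have hE1 : 0 < t ^ e₁ := Real.rpow_pos_of_pos ht _
      unfold ATSLaplace
      congr 1
      have h1 : 1 * (kbar * t ^ β) / ((1 - α) * t) = c * (t ^ β / t) := by
        rw [hc]; field_simp
      have w : t ^ e₁ * t ^ β / t = t ^ e₂ := by
        calc t ^ e₁ * t ^ β / t = t ^ (e₁ + β) / t ^ (1:ℝ) := by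
              rw [← Real.rpow_add ht, Real.rpow_one]
          _ = t ^ (e₁ + β - 1) := (Real.rpow_sub ht _ _).symm
          _ = t ^ e₂ := by
              rw [he₁, he₂]
              congr 1
              field_simp
              try ring
      have h2 : t ^ e₁ + c * t ^ e₂ = t ^ e₁ * (1 + c * (t ^ β / t)) := by
        rw [← w]; ring
      have hee : e₁ * α = (1:ℝ) - β := by
        rw [he₁]; field_simp
      have houter : (t ^ e₁ * (1 + c * (t ^ β / t))) ^ α
          = t ^ ((1:ℝ) - β) * (1 + c * (t ^ β / t)) ^ α := by
        have hcpos : (0:ℝ) ≤ 1 + c * (t ^ β / t) := by positivity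
        rw [Real.mul_rpow hE1.le hcpos, ← Real.rpow_mul ht.le, hee]
      have h3 : t / (kbar * t ^ β) = t ^ ((1:ℝ) - β) / kbar := by
        rw [Real.rpow_sub ht, Real.rpow_one, div_div, mul_comm (t ^ β) kbar]
      rw [h1, h2, houter, h3]
      ring
    have l1 := rpow_tendsto0 (show (0:ℝ) < 1 - β by linarith)
    have l2 := rpow_tendsto0 he1pos
    have l3 := rpow_tendsto0 he2pos
    have linner : Tendsto (fun t : ℝ => t ^ e₁ + c * t ^ e₂) (𝓝[>] (0:ℝ)) (𝓝 0) := by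
      simpa using l2.add (l3.const_mul c)
    have louter : Tendsto (fun t : ℝ => (t ^ e₁ + c * t ^ e₂) ^ α) (𝓝[>] (0:ℝ)) (𝓝 0) := by
      have hcont := Real.continuousAt_rpow_const 0 α (Or.inr hα0.le)
      simpa [Function.comp_def, Real.zero_rpow hα0.ne'] using Filter.Tendsto.comp hcont linner
    have hg : Tendsto (fun t : ℝ => (1/kbar) * ((1 - α)/α) *
        (t ^ ((1:ℝ) - β) - (t ^ e₁ + c * t ^ e₂) ^ α)) (𝓝[>] (0:ℝ)) (𝓝 0) := by
      simpa using ((l1.sub louter).const_mul ((1/kbar) * ((1 - α)/α)))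
    have hfin := Filter.Tendsto.comp (Real.continuous_exp.tendsto 0) hg
    rw [Real.exp_zero] at hfin
    exact Filter.Tendsto.congr' (heq.mono fun t ht => ht.symm) hfin
  -- tail estimate
  have htail : ∀ z₀ : ℝ, 0 < z₀ →
      Tendsto (fun t => (μ t (Set.Ici z₀)).toReal) (𝓝[>] (0:ℝ)) (𝓝 0) := by
    intro z₀ hz₀
    have hez : 0 < 1 - Real.exp (-z₀) := by
      have : Real.exp (-z₀) < 1 := Real.exp_lt_one_iff.2 (by linarith)
      linarith
    have hub : ∀ᶠ t in 𝓝[>] (0:ℝ), (μ t (Set.Ici z₀)).toReal ≤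
        (1 - ATSLaplace α kbar β t 1) / (1 - Real.exp (-z₀)) := by
      filter_upwards [self_mem_nhdsWithin] with t ht
      replace ht : 0 < t := ht
      haveI := hprob t ht
      rw [le_div_iff₀ hez]
      have hint1 : Integrable (fun x => 1 - Real.exp (-1 * x)) (μ t) :=
        (integrable_const 1).sub (hexpint t ht 1 zero_le_one)
      have hs1 : (μ t (Set.Ici z₀)).toReal * (1 - Real.exp (-z₀))
          = ∫ _x in Set.Ici z₀, (1 - Real.exp (-z₀)) ∂ μ t := by
        rw [setIntegral_const, smul_eq_mul]
        rfl
      have hs2 : (∫ _x in Set.Ici z₀, (1 - Real.exp (-z₀)) ∂ μ t)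
          ≤ ∫ x in Set.Ici z₀, (1 - Real.exp (-1 * x)) ∂ μ t := by
        refine setIntegral_mono_on (integrableOn_const (measure_lt_top _ _).ne)
          hint1.integrableOn measurableSet_Ici ?_
        intro x hx
        have : Real.exp (-1 * x) ≤ Real.exp (-z₀) := Real.exp_le_exp.2 (by
          simp only [Set.mem_Ici] at hx
          linarith)
        linarith
      have hs3 : (∫ x in Set.Ici z₀, (1 - Real.exp (-1 * x)) ∂ μ t)
          ≤ ∫ x, (1 - Real.exp (-1 * x)) ∂ μ t := by
        refine setIntegral_le_integral hint1 ?_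
        filter_upwards [haeN t ht] with x hx
        have : Real.exp (-1 * x) ≤ 1 := Real.exp_le_one_iff.2 (by linarith)
        simp only [Pi.zero_apply]
        linarith
      have hs4 : (∫ x, (1 - Real.exp (-1 * x)) ∂ μ t) = 1 - ATSLaplace α kbar β t 1 := by
        rw [integral_sub (integrable_const 1) (hexpint t ht 1 zero_le_one),
          integral_const, hlap t ht 1 zero_le_one]
        simp
      linarith
    have hupper : Tendsto (fun t => (1 - ATSLaplace α kbar β t 1) / (1 - Real.exp (-z₀)))
        (𝓝[>] (0:ℝ)) (𝓝 0) := by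
      have := ((tendsto_const_nhds (x := (1:ℝ))).sub hL1).div_const (1 - Real.exp (-z₀))
      simpa using this
    refine tendsto_of_tendsto_of_tendsto_of_le_of_le' tendsto_const_nhds hupper
      (Eventually.of_forall fun t => ENNReal.toReal_nonneg) hub
  -- lower bound for φ_t √t
  have hx_t : Tendsto (fun t : ℝ => σbar^2*ηbar*kbar/(1 - α) * t ^ (β - 1/2 : ℝ))
      (𝓝[>] (0:ℝ)) (𝓝 0) := by
    have := (rpow_tendsto0 (show (0:ℝ) < β - 1/2 by linarith)).const_mul
      (σbar^2*ηbar*kbar/(1 - α))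
    simpa using this
  have hφbd : ∀ᶠ t in 𝓝[>] (0:ℝ),
      σbar^2*ηbar/2 ≤ ATSphi α kbar σbar ηbar β (-(1/2)) t * Real.sqrt t := by
    filter_upwards [self_mem_nhdsWithin, hx_t.eventually (eventually_lt_nhds one_pos)]
      with t ht hxlt
    replace ht : 0 < t := ht
    unfold ATSphi ATSLaplace
    rw [Real.log_exp, Real.sqrt_eq_rpow]
    have hA : 0 < t ^ β := Real.rpow_pos_of_pos ht _
    have hB : 0 < t ^ ((1:ℝ)/2) := Real.rpow_pos_of_pos ht _
    have hxv : 0 < t ^ (β - 1/2 : ℝ) := Real.rpow_pos_of_pos ht _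
    set A := t ^ β with hA'
    set B := t ^ ((1:ℝ)/2) with hB'
    set x := σbar^2*ηbar*kbar/(1 - α) * t ^ (β - 1/2 : ℝ) with hx'
    have hx0 : 0 ≤ x := by positivity
    have hx1 : x ≤ 1 := hxlt.le
    have h1x : (0:ℝ) < 1 + x := by linarith
    have htd : t ^ (-(1/2) : ℝ) = B⁻¹ := by
      rw [hB']; exact Real.rpow_neg ht.le _
    have htx : t ^ (β - 1/2 : ℝ) = A / B := by
      rw [hA', hB']
      have := Real.rpow_sub ht β (1/2)
      simpa using this
    have harg : t * σbar ^ 2 * (ηbar * t ^ (-(1/2) : ℝ)) * (kbar * A) / ((1 - α) * t) = x := by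
      rw [htd, hx', htx]
      field_simp
    rw [harg]
    have hkey := bern_low hα0 hα1 hx0
    have hco : 0 ≤ t / (kbar * A) * ((1 - α) / α) := by positivity
    calc σbar^2*ηbar/2 ≤ σbar^2*ηbar/(1 + x) := by
          refine div_le_div_of_nonneg_left (by positivity) h1x (by linarith)
      _ = t / (kbar * A) * ((1 - α) / α) * (α * x / (1 + x)) / t * B := by
          rw [hx', htx]
          field_simp
      _ ≤ t / (kbar * A) * ((1 - α) / α) * ((1 + x) ^ α - 1) / t * B := by
          refine mul_le_mul_of_nonneg_right ?_ hB.le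
          refine (div_le_div_iff_of_pos_right ht).2 ?_
          exact mul_le_mul_of_nonneg_left hkey hco
      _ = -(t / (kbar * A) * ((1 - α) / α) * (1 - (1 + x) ^ α)) / t * B := by ring
  -- main convergence of I
  have hIlim : Tendsto I (𝓝[>] (0:ℝ)) (𝓝 1) := by
    rw [Metric.tendsto_nhds]
    intro ε hε
    obtain ⟨ε', hε'pos, hε'le, hε'ε⟩ : ∃ ε' : ℝ, 0 < ε' ∧ ε' ≤ 1/2 ∧ 2*ε' < ε := by
      refine ⟨min (ε/3) (1/2), lt_min (by linarith) one_half_pos, min_le_right _ _, ?_⟩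
      have h := min_le_left (ε/3) (1/2)
      linarith
    obtain ⟨M, hM⟩ :=
      (stdN_tendsto_one.eventually (eventually_gt_nhds (by linarith : 1 - ε' < 1))).exists
    obtain ⟨r, hrpos, hr1, hMbd⟩ := choose_r σbar ηbar M hσ hη
    have hz₀pos : 0 < r^2 := by positivity
    have hsr : Real.sqrt (r^2) = r := Real.sqrt_sq hrpos.le
    filter_upwards [self_mem_nhdsWithin,
      eventually_nhdsWithin_of_eventually_nhds (eventually_lt_nhds one_pos),
      hφbd,
      (htail (r^2) hz₀pos).eventually (eventually_lt_nhds hε'pos)]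
      with t ht ht1 hφ htail'
    replace ht : 0 < t := ht
    haveI := hprob t ht
    set S : Set ℝ := Set.Ioc 0 (r^2) with hS
    have hSm : MeasurableSet S := measurableSet_Ioc
    have hpt : ∀ z ∈ S, 1 - ε' ≤
        stdN (ATSl α kbar σbar ηbar β (-(1/2)) t z - σbar * Real.sqrt (z*t)/2) := by
      intro z hz
      obtain ⟨hz0, hzz₀⟩ := hz
      have hsz : 0 < Real.sqrt z := Real.sqrt_pos.2 hz0
      have hszr : Real.sqrt z ≤ r := by
        rw [← hsr]; exact Real.sqrt_le_sqrt hzz₀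
      have harg : M ≤ ATSl α kbar σbar ηbar β (-(1/2)) t z - σbar * Real.sqrt (z*t)/2 := by
        unfold ATSl
        have hmul : Real.sqrt (z*t) = Real.sqrt z * Real.sqrt t := Real.sqrt_mul hz0.le t
        have hone : t ^ (-(1/2) : ℝ) * Real.sqrt t = 1 := by
          rw [Real.sqrt_eq_rpow, ← Real.rpow_add ht]
          norm_num
        have hterm1 : -(σbar * (ηbar * t ^ (-(1/2) : ℝ))) * Real.sqrt (z*t)
            = -(σbar * ηbar * Real.sqrt z) := by
          rw [hmul]
          linear_combination (-(σbar*ηbar*Real.sqrt z)) * hone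
        have hterm2 : σbar*ηbar/(2*Real.sqrt z)
            ≤ ATSphi α kbar σbar ηbar β (-(1/2)) t * Real.sqrt t / (σbar * Real.sqrt z) := by
          have hnum : σbar^2*ηbar/2 ≤ ATSphi α kbar σbar ηbar β (-(1/2)) t * Real.sqrt t := hφ
          have hstep : σbar^2*ηbar/2/(σbar*Real.sqrt z)
              ≤ ATSphi α kbar σbar ηbar β (-(1/2)) t * Real.sqrt t / (σbar * Real.sqrt z) :=
            (div_le_div_iff_of_pos_right (by positivity)).2 hnum
          have heq2 : σbar^2*ηbar/2/(σbar*Real.sqrt z) = σbar*ηbar/(2*Real.sqrt z) := by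
            rw [div_div, div_eq_div_iff (by positivity) (by positivity)]
            ring
          linarith
        have hst1 : Real.sqrt t ≤ 1 := by
          rw [← Real.sqrt_one]
          exact Real.sqrt_le_sqrt ht1.le
        have hterm3 : σbar * Real.sqrt (z*t)/2 ≤ σbar/2*r := by
          rw [hmul]
          have i1 : Real.sqrt z * Real.sqrt t ≤ Real.sqrt z :=
            mul_le_of_le_one_right hsz.le hst1
          have i3 : σbar * (Real.sqrt z * Real.sqrt t) ≤ σbar * r :=
            mul_le_mul_of_nonneg_left (i1.trans hszr) hσ.le
          linarith
        have ineq4 : σbar*ηbar/(2*r) ≤ σbar*ηbar/(2*Real.sqrt z) :=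
          div_le_div_of_nonneg_left (by positivity) (by positivity) (by linarith)
        have ineq5 : σbar*ηbar*Real.sqrt z ≤ σbar*ηbar*r :=
          mul_le_mul_of_nonneg_left hszr (by positivity)
        have hexp : (σbar*ηbar + σbar/2)*r = σbar*ηbar*r + σbar/2*r := by ring
        rw [hterm1]
        linarith
      exact le_trans hM.le (stdN_mono harg)
    -- measure of S is close to 1
    have hScle : (μ t Sᶜ).toReal ≤ ε' := by
      have hsub : Sᶜ ⊆ Set.Iic 0 ∪ Set.Ici (r^2) := by
        intro w hw
        simp only [hS, Set.mem_compl_iff, Set.mem_Ioc, not_and_or, not_lt, not_le] at hw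
        rcases hw with h | h
        · exact Or.inl h
        · exact Or.inr h.le
      have hm1 : μ t Sᶜ ≤ μ t (Set.Ici (r^2)) := by
        calc μ t Sᶜ ≤ μ t (Set.Iic 0 ∪ Set.Ici (r^2)) := measure_mono hsub
          _ ≤ μ t (Set.Iic 0) + μ t (Set.Ici (r^2)) := measure_union_le _ _
          _ = μ t (Set.Ici (r^2)) := by rw [hIic0 t ht, zero_add]
      calc (μ t Sᶜ).toReal ≤ (μ t (Set.Ici (r^2))).toReal :=
            ENNReal.toReal_mono (measure_ne_top _ _) hm1
        _ ≤ ε' := htail'.le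
    have hSmeas : 1 - ε' ≤ (μ t S).toReal := by
      have hadd : μ t S + μ t Sᶜ = 1 := by
        rw [measure_add_measure_compl hSm, measure_univ]
      have hadd' : (μ t S).toReal + (μ t Sᶜ).toReal = 1 := by
        rw [← ENNReal.toReal_add (measure_ne_top _ _) (measure_ne_top _ _), hadd]
        simp
      linarith
    have hIeq : I t = (∫ z in S, stdN
          (ATSl α kbar σbar ηbar β (-(1/2)) t z - σbar * Real.sqrt (z*t)/2) ∂ μ t)
        + ∫ z in Sᶜ, stdN
          (ATSl α kbar σbar ηbar β (-(1/2)) t z - σbar * Real.sqrt (z*t)/2) ∂ μ t :=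
      (integral_add_compl hSm (hIint t ht)).symm
    have h2 : (1 - ε') * (μ t S).toReal ≤ ∫ z in S, stdN
        (ATSl α kbar σbar ηbar β (-(1/2)) t z - σbar * Real.sqrt (z*t)/2) ∂ μ t := by
      have hmono := setIntegral_mono_on
        (integrableOn_const (measure_lt_top _ _).ne)
        ((hIint t ht).integrableOn) hSm hpt
      rwa [setIntegral_const, smul_eq_mul, mul_comm] at hmono
    have h3 : 0 ≤ ∫ z in Sᶜ, stdN
        (ATSl α kbar σbar ηbar β (-(1/2)) t z - σbar * Real.sqrt (z*t)/2) ∂ μ t :=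
      setIntegral_nonneg hSm.compl fun z _ => stdN_nonneg _
    have hIlower : 1 - 2*ε' ≤ I t := by
      have hq : (1 - ε') * (1 - ε') ≤ (1 - ε') * (μ t S).toReal :=
        mul_le_mul_of_nonneg_left hSmeas (by linarith)
      nlinarith
    have hIupper : I t ≤ 1 := by
      have hmono2 := integral_mono (hIint t ht) (integrable_const 1)
        (fun z => stdN_le_one _)
      rwa [integral_const, probReal_univ, smul_eq_mul, one_mul] at hmono2
    rw [Real.dist_eq, abs_of_nonpos (by linarith)]
    linarith
  -- σhat t √t /2 → 0
  have hslim : Tendsto (fun t => σhat t * Real.sqrt t / 2) (𝓝[>] (0:ℝ)) (𝓝 0) := by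
    rw [Metric.tendsto_nhds]
    intro ε hε
    have hd : 0 < stdN ε - 1/2 := by linarith [stdN_pos_gt hε]
    filter_upwards [self_mem_nhdsWithin,
      hIlim.eventually (eventually_gt_nhds (by linarith : 1 - (stdN ε - 1/2) < 1))]
      with t ht hIt
    replace ht : 0 < t := ht
    have hC := hC2 t ht
    have h1 : stdN (σhat t * Real.sqrt t / 2) < stdN ε := by linarith
    have h2 : σhat t * Real.sqrt t / 2 < ε := by
      by_contra h
      push_neg at h
      exact absurd (stdN_mono h) (not_le.2 h1)
    have hspos : 0 < σhat t * Real.sqrt t / 2 :=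
      div_pos (mul_pos (hσpos t ht) (Real.sqrt_pos.2 ht)) two_pos
    rw [Real.dist_eq, sub_zero, abs_of_pos hspos]
    exact h2
  -- conclusion
  have hneg : Tendsto (fun t => -(σhat t * Real.sqrt t / 2)) (𝓝[>] (0:ℝ)) (𝓝 0) := by
    simpa using hslim.neg
  have hnum : Tendsto (fun t => stdN (-(σhat t * Real.sqrt t / 2)) - I t)
      (𝓝[>] (0:ℝ)) (𝓝 (1/2 - 1)) := by
    have h1 : Tendsto (fun t => stdN (-(σhat t * Real.sqrt t / 2))) (𝓝[>] (0:ℝ)) (𝓝 (1/2)) := by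
      have hcomp := Filter.Tendsto.comp (stdN_continuous.tendsto 0) hneg
      rw [stdN_zero] at hcomp
      exact hcomp
    exact h1.sub hIlim
  have hdcont : Continuous stdNd := by
    unfold stdNd
    exact continuous_const.mul (Real.continuous_exp.comp (by fun_prop))
  have hden : Tendsto (fun t => stdNd (-(σhat t * Real.sqrt t / 2)))
      (𝓝[>] (0:ℝ)) (𝓝 (stdNd 0)) := (hdcont.tendsto 0).comp hneg
  have hstdNd0 : stdNd 0 = (Real.sqrt (2*Real.pi))⁻¹ := by
    unfold stdNd
    norm_num
  have hdne : stdNd 0 ≠ 0 := by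
    rw [hstdNd0]
    exact inv_ne_zero sqrt_two_pi_pos.ne'
  have hfinal := hnum.div hden hdne
  have hval : (1/2 - 1 : ℝ) / stdNd 0 = -Real.sqrt (Real.pi/2) := by
    rw [hstdNd0, div_inv_eq_mul]
    have h2π : Real.sqrt (2*Real.pi) = 2*Real.sqrt (Real.pi/2) := by
      rw [show (2:ℝ)*Real.pi = 2^2*(Real.pi/2) by ring,
        Real.sqrt_mul (by positivity), Real.sqrt_sq (by norm_num : (0:ℝ) ≤ 2)]
    rw [h2π]
    ring
  rw [hval] at hfinal
  exact hfinal
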